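/- In the graded Lie algebra setting of the Kantor–Koecher–Tits construction (g = n̄ ⊕ m ⊕ n with sl₂-triple (f,h,e), n abelian with Jordan product x∘y = ½[x,[f,y]]), suppose m acts faithfully on n and m = [n, n̄]. Then any Jordan algebra automorphism g of (n, ∘) that also commutes with the map w : n → n̄ extends uniquely to a Lie algebra automorphism of g fixing f, h, and e; i.e. the natural map from the centralizer of (f,h,e) in Aut(g) to Aut(J) (J = n with product ∘) is bijective. -/
import Mathlib


/-- Kantor–Koecher–Tits: any automorphism of the Jordan algebra `(n, ∘)` extends uniquely
to a Lie algebra automorphism of `g = n̄ ⊕ m ⊕ n` fixing the `sl₂`-triple `(f, h, e)`;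
i.e. the natural map from the centralizer of `(f,h,e)` in `Aut(g)` to `Aut(J)` is
bijective. -/
theorem stmt_12 {k : Type*} [Field k] [CharZero k]
    {g : Type*} [LieRing g] [LieAlgebra k g]
    (nb m n : Submodule k g)
    (f h e : g)
    (hf : f ∈ nb) (he : e ∈ n) (hhm : h ∈ m)
    (htriple₁ : ⁅h, e⁆ = (2 : k) • e)
    (htriple₂ : ⁅h, f⁆ = (-2 : k) • f)
    (htriple₃ : ⁅e, f⁆ = h)
    (hgradn : ∀ x ∈ n, ⁅h, x⁆ = (2 : k) • x)
    (hgradnb : ∀ x ∈ nb, ⁅h, x⁆ = (-2 : k) • x)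
    (hgradm : ∀ x ∈ m, ⁅h, x⁆ = 0)
    (hnab : ∀ x ∈ n, ∀ y ∈ n, ⁅x, y⁆ = 0)
    (hnbab : ∀ x ∈ nb, ∀ y ∈ nb, ⁅x, y⁆ = 0)
    (hbrk₁ : ∀ x ∈ n, ∀ y ∈ nb, ⁅x, y⁆ ∈ m)
    (hbrk₂ : ∀ x ∈ m, ∀ y ∈ n, ⁅x, y⁆ ∈ n)
    (hbrk₃ : ∀ x ∈ m, ∀ y ∈ nb, ⁅x, y⁆ ∈ nb)
    -- direct sum decomposition `g = n̄ ⊕ m ⊕ n`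
    (hdecomp : ∀ x : g, ∃! t : g × g × g,
      t.1 ∈ nb ∧ t.2.1 ∈ m ∧ t.2.2 ∈ n ∧ x = t.1 + t.2.1 + t.2.2)
    -- `m` acts faithfully on `n` and `m = [n, n̄]`
    (hfaithful : ∀ X ∈ m, (∀ x ∈ n, ⁅X, x⁆ = 0) → X = 0)
    (hm_span : m = Submodule.span k {z : g | ∃ x ∈ n, ∃ y ∈ nb, z = ⁅x, y⁆})
    -- a Jordan algebra automorphism `Ψ` of `(n, ∘)`, `x∘y = ½[x,[f,y]]`
    (Ψ : g →ₗ[k] g)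
    (hΨn : ∀ x ∈ n, Ψ x ∈ n)
    (hΨsurj : ∀ y ∈ n, ∃ x ∈ n, Ψ x = y)
    (hΨinj : ∀ x ∈ n, Ψ x = 0 → x = 0)
    (hΨjordan : ∀ x ∈ n, ∀ y ∈ n,
      Ψ ((2 : k)⁻¹ • ⁅x, ⁅f, y⁆⁆) = (2 : k)⁻¹ • ⁅Ψ x, ⁅f, Ψ y⁆⁆) :
    ∃! φ : g ≃ₗ⁅k⁆ g, φ f = f ∧ φ h = h ∧ φ e = e ∧ ∀ x ∈ n, φ x = Ψ x := by
  classical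
  have h2 : (2:k) ≠ 0 := two_ne_zero
  have h4 : (4:k) ≠ 0 := by norm_num
  have hskw : ∀ u v : g, ⁅u, v⁆ = -⁅v, u⁆ := fun u v => by rw [← lie_skew u v]
  have hfe : ⁅f, e⁆ = -h := by rw [hskw, htriple₃]
  -- membership basics
  have hfmem : ∀ x ∈ n, ⁅f, x⁆ ∈ m := by
    intro x hx
    have : (-(⁅x, f⁆) : g) ∈ m := neg_mem (hbrk₁ x hx f hf)
    rwa [lie_skew] at this
  have hemem : ∀ a ∈ nb, ⁅e, a⁆ ∈ m := fun a ha => hbrk₁ e he a ha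
  have hTn : ∀ x ∈ n, ∀ y ∈ n, ⁅x, ⁅f, y⁆⁆ ∈ n := by
    intro x hx y hy
    have : (-(⁅⁅f, y⁆, x⁆) : g) ∈ n := neg_mem (hbrk₂ _ (hfmem y hy) x hx)
    rwa [lie_skew] at this
  have heXn : ∀ X ∈ m, ⁅e, X⁆ ∈ n := by
    intro X hX
    have : (-(⁅X, e⁆) : g) ∈ n := neg_mem (hbrk₂ X hX e he)
    rwa [lie_skew] at this
  have hEmem : ∀ a ∈ nb, ⁅e, ⁅e, a⁆⁆ ∈ n := fun a ha => heXn _ (hemem a ha)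
  have hFmem : ∀ x ∈ n, ⁅f, ⁅f, x⁆⁆ ∈ nb := by
    intro x hx
    have : (-(⁅⁅f, x⁆, f⁆) : g) ∈ nb := neg_mem (hbrk₃ _ (hfmem x hx) f hf)
    rwa [lie_skew] at this
  -- sl2 computations
  have hefx : ∀ x ∈ n, ⁅e, ⁅f, x⁆⁆ = (2:k) • x := by
    intro x hx
    rw [leibniz_lie, htriple₃, hnab e he x hx, lie_zero, add_zero, hgradn x hx]
  have hfea : ∀ a ∈ nb, ⁅f, ⁅e, a⁆⁆ = (2:k) • a := by
    intro a ha
    rw [leibniz_lie, hnbab f hf a ha, lie_zero, add_zero, hfe, neg_lie, hgradnb a ha]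
    simp
  have hEF : ∀ x ∈ n, ⁅e, ⁅e, ⁅f, ⁅f, x⁆⁆⁆⁆ = (4:k) • x := by
    intro x hx
    have h1 : ⁅e, ⁅f, ⁅f, x⁆⁆⁆ = (2:k) • ⁅f, x⁆ := by
      rw [leibniz_lie, htriple₃, hgradm _ (hfmem x hx), zero_add, hefx x hx, lie_smul]
    rw [h1, lie_smul, hefx x hx, smul_smul]
    norm_num
  have hFE : ∀ a ∈ nb, ⁅f, ⁅f, ⁅e, ⁅e, a⁆⁆⁆⁆ = (4:k) • a := by
    intro a ha
    have h1 : ⁅f, ⁅e, ⁅e, a⁆⁆⁆ = (2:k) • ⁅e, a⁆ := by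
      rw [leibniz_lie, hfe, neg_lie, hgradm _ (hemem a ha), neg_zero,
        zero_add, hfea a ha, lie_smul]
    rw [h1, lie_smul, hfea a ha, smul_smul]
    norm_num
  have ha_repr : ∀ a ∈ nb, a = (4:k)⁻¹ • ⁅f, ⁅f, ⁅e, ⁅e, a⁆⁆⁆⁆ := by
    intro a ha
    rw [hFE a ha, smul_smul, inv_mul_cancel₀ h4, one_smul]
  have hx_repr : ∀ x ∈ n, x = (4:k)⁻¹ • ⁅e, ⁅e, ⁅f, ⁅f, x⁆⁆⁆⁆ := by
    intro x hx
    rw [hEF x hx, smul_smul, inv_mul_cancel₀ h4, one_smul]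
  -- Ψ commutes with T
  have hΨT : ∀ x ∈ n, ∀ y ∈ n, Ψ ⁅x, ⁅f, y⁆⁆ = ⁅Ψ x, ⁅f, Ψ y⁆⁆ := by
    intro x hx y hy
    have h1 := hΨjordan x hx y hy
    rw [map_smul] at h1
    exact smul_right_injective g (inv_ne_zero h2) h1
  -- commutativity of T
  have hTcomm : ∀ x ∈ n, ∀ y ∈ n, ⁅x, ⁅f, y⁆⁆ = ⁅y, ⁅f, x⁆⁆ := by
    intro x hx y hy
    have h1 : ⁅x, ⁅f, y⁆⁆ = ⁅⁅x, f⁆, y⁆ + ⁅f, ⁅x, y⁆⁆ := leibniz_lie x f y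
    rw [hnab x hx y hy, lie_zero, add_zero] at h1
    rw [h1, hskw x f, neg_lie, hskw ⁅f, x⁆ y, neg_neg]
  have hΨe : Ψ e = e := by
    have h1 : ∀ y ∈ n, ⁅Ψ e, ⁅f, y⁆⁆ = (2:k) • y := by
      intro y hy
      obtain ⟨x, hx, rfl⟩ := hΨsurj y hy
      rw [← hΨT e he x hx, hefx x hx, map_smul]
    have h2' : ⁅Ψ e, ⁅f, e⁆⁆ = (2:k) • e := h1 e he
    have h3 : ⁅Ψ e, ⁅f, e⁆⁆ = ⁅e, ⁅f, Ψ e⁆⁆ := hTcomm _ (hΨn e he) e he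
    rw [h3, hefx _ (hΨn e he)] at h2'
    exact smul_right_injective g h2 h2'
  -- key bracket identity
  have hkey0 : ∀ x ∈ n, ∀ v ∈ n, ∀ z ∈ n,
      ⁅⁅x, ⁅f, ⁅f, v⁆⁆⁆, z⁆ =
        ⁅⁅x, ⁅f, z⁆⁆, ⁅f, v⁆⁆ - ⁅x, ⁅f, ⁅z, ⁅f, v⁆⁆⁆⁆ - ⁅z, ⁅f, ⁅x, ⁅f, v⁆⁆⁆⁆ := by
    intro x hx v hv z hz
    have e1 : ⁅x, ⁅f, ⁅f, v⁆⁆⁆ = ⁅⁅x, f⁆, ⁅f, v⁆⁆ + ⁅f, ⁅x, ⁅f, v⁆⁆⁆ := leibniz_lie x f ⁅f, v⁆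
    rw [e1, add_lie]
    have eA : ⁅⁅⁅x, f⁆, ⁅f, v⁆⁆, z⁆
        = ⁅⁅x, ⁅f, z⁆⁆, ⁅f, v⁆⁆ - ⁅x, ⁅f, ⁅z, ⁅f, v⁆⁆⁆⁆ := by
      rw [lie_lie]
      have s1 : ⁅⁅f, v⁆, z⁆ = -⁅z, ⁅f, v⁆⁆ := hskw _ _
      have s2 : ⁅⁅x, f⁆, z⁆ = ⁅x, ⁅f, z⁆⁆ := by
        rw [lie_lie, hnab x hx z hz, lie_zero, sub_zero]
      have s3 : ⁅⁅x, f⁆, ⁅z, ⁅f, v⁆⁆⁆ = ⁅x, ⁅f, ⁅z, ⁅f, v⁆⁆⁆⁆ := by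
        rw [lie_lie, hnab x hx _ (hTn z hz v hv), lie_zero, sub_zero]
      rw [s1, s2, lie_neg, s3, hskw ⁅f, v⁆ ⁅x, ⁅f, z⁆⁆]
      abel
    rw [eA, hskw ⁅f, ⁅x, ⁅f, v⁆⁆⁆ z]
    abel
  have hkey : ∀ x ∈ n, ∀ v ∈ n, ∀ z ∈ n,
      Ψ ⁅⁅x, ⁅f, ⁅f, v⁆⁆⁆, z⁆ = ⁅⁅Ψ x, ⁅f, ⁅f, Ψ v⁆⁆⁆, Ψ z⁆ := by
    intro x hx v hv z hz
    rw [hkey0 x hx v hv z hz, hkey0 _ (hΨn x hx) _ (hΨn v hv) _ (hΨn z hz), map_sub, map_sub,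
      hΨT _ (hTn x hx z hz) v hv, hΨT x hx _ (hTn z hz v hv), hΨT z hz _ (hTn x hx v hv),
      hΨT x hx z hz, hΨT z hz v hv, hΨT x hx v hv]
  -- the map on nb
  have hexnb : ∀ a : g, ∃ b : g, b = (4:k)⁻¹ • ⁅f, ⁅f, Ψ ⁅e, ⁅e, a⁆⁆⁆⁆ := fun a => ⟨_, rfl⟩
  choose fnb hfnb_def using hexnb
  have hfnb_mem : ∀ a ∈ nb, fnb a ∈ nb := by
    intro a ha
    rw [hfnb_def]
    exact Submodule.smul_mem _ _ (hFmem _ (hΨn _ (hEmem a ha)))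
  have hfnb_E : ∀ a ∈ nb, ⁅e, ⁅e, fnb a⁆⁆ = Ψ ⁅e, ⁅e, a⁆⁆ := by
    intro a ha
    rw [hfnb_def, lie_smul, lie_smul, hEF _ (hΨn _ (hEmem a ha)), smul_smul,
      inv_mul_cancel₀ h4, one_smul]
  have hfnb_F : ∀ v ∈ n, fnb ⁅f, ⁅f, v⁆⁆ = ⁅f, ⁅f, Ψ v⁆⁆ := by
    intro v hv
    rw [hfnb_def, hEF v hv, map_smul, lie_smul, lie_smul, smul_smul, inv_mul_cancel₀ h4,
      one_smul]
  have hfnb_add : ∀ a b : g, fnb (a + b) = fnb a + fnb b := by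
    intro a b
    simp only [hfnb_def, lie_add, map_add, smul_add]
  have hfnb_smul : ∀ (c : k) (a : g), fnb (c • a) = c • fnb a := by
    intro c a
    simp only [hfnb_def, lie_smul, map_smul]
    rw [smul_comm]
  have hfnb_zero : fnb 0 = 0 := by simp [hfnb_def]
  have hfnb_inj : ∀ a ∈ nb, fnb a = 0 → a = 0 := by
    intro a ha h0
    have h1 : ⁅e, ⁅e, fnb a⁆⁆ = (0:g) := by rw [h0]; simp
    rw [hfnb_E a ha] at h1
    have h3 := hΨinj _ (hEmem a ha) h1
    rw [ha_repr a ha, h3]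
    simp
  have hfnb_surj : ∀ b ∈ nb, ∃ a ∈ nb, fnb a = b := by
    intro b hb
    obtain ⟨v, hv, hΨv⟩ := hΨsurj ((4:k)⁻¹ • ⁅e, ⁅e, b⁆⁆)
      (Submodule.smul_mem _ _ (hEmem b hb))
    refine ⟨⁅f, ⁅f, v⁆⁆, hFmem v hv, ?_⟩
    rw [hfnb_F v hv, hΨv, lie_smul, lie_smul]
    exact (ha_repr b hb).symm
  -- candidate identity on generators of m
  have hcand : ∀ x ∈ n, ∀ a ∈ nb, ∀ z ∈ n, ⁅⁅Ψ x, fnb a⁆, Ψ z⁆ = Ψ ⁅⁅x, a⁆, z⁆ := by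
    intro x hx a ha z hz
    have hEa : ⁅e, ⁅e, a⁆⁆ ∈ n := hEmem a ha
    calc ⁅⁅Ψ x, fnb a⁆, Ψ z⁆
        = (4:k)⁻¹ • ⁅⁅Ψ x, ⁅f, ⁅f, Ψ ⁅e, ⁅e, a⁆⁆⁆⁆⁆, Ψ z⁆ := by
          rw [hfnb_def, lie_smul, smul_lie]
      _ = (4:k)⁻¹ • Ψ ⁅⁅x, ⁅f, ⁅f, ⁅e, ⁅e, a⁆⁆⁆⁆⁆, z⁆ := by rw [hkey x hx _ hEa z hz]
      _ = Ψ ⁅⁅x, a⁆, z⁆ := by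
          rw [← map_smul, ← smul_lie, ← lie_smul, ← ha_repr a ha]
  -- uniqueness of elements of m by action on n
  have huniqm : ∀ Y ∈ m, ∀ Y' ∈ m, (∀ z ∈ n, ⁅Y, Ψ z⁆ = ⁅Y', Ψ z⁆) → Y = Y' := by
    intro Y hY Y' hY' hYY
    have h0 : ∀ y ∈ n, ⁅Y - Y', y⁆ = 0 := by
      intro y hy
      obtain ⟨z, hz, rfl⟩ := hΨsurj y hy
      rw [sub_lie, hYY z hz, sub_self]
    exact sub_eq_zero.mp (hfaithful (Y - Y') (sub_mem hY hY') h0)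
  -- existence of the conjugated action on m
  have hexS : ∀ X ∈ Submodule.span k {z : g | ∃ x ∈ n, ∃ y ∈ nb, z = ⁅x, y⁆},
      ∃ Y : g, Y ∈ m ∧ ∀ z ∈ n, ⁅Y, Ψ z⁆ = Ψ ⁅X, z⁆ := by
    intro X hX
    induction hX using Submodule.span_induction with
    | mem w hw =>
      obtain ⟨x, hx, a, ha, rfl⟩ := hw
      exact ⟨⁅Ψ x, fnb a⁆,
        hbrk₁ _ (hΨn x hx) _ (hfnb_mem a ha), fun z hz => hcand x hx a ha z hz⟩
    | zero => exact ⟨0, zero_mem _, by simp⟩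
    | add x y hxm hym ihx ihy =>
      obtain ⟨Y1, hY1, hs1⟩ := ihx
      obtain ⟨Y2, hY2, hs2⟩ := ihy
      refine ⟨Y1 + Y2, add_mem hY1 hY2, fun z hz => ?_⟩
      rw [add_lie, hs1 z hz, hs2 z hz, add_lie, map_add]
    | smul c x hxm ih =>
      obtain ⟨Y, hY, hs⟩ := ih
      refine ⟨c • Y, Submodule.smul_mem _ _ hY, fun z hz => ?_⟩
      rw [smul_lie, hs z hz, smul_lie, map_smul]
  have hex : ∀ X : g, ∃ Y : g, X ∈ m → (Y ∈ m ∧ ∀ z ∈ n, ⁅Y, Ψ z⁆ = Ψ ⁅X, z⁆) := by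
    intro X
    by_cases hX : X ∈ m
    · obtain ⟨Y, hY1, hY2⟩ := hexS X (by rw [← hm_span]; exact hX)
      exact ⟨Y, fun _ => ⟨hY1, hY2⟩⟩
    · exact ⟨0, fun hX' => absurd hX' hX⟩
  choose fm hfm using hex
  have hfm_mem : ∀ X ∈ m, fm X ∈ m := fun X hX => (hfm X hX).1
  have hfm_spec : ∀ X ∈ m, ∀ z ∈ n, ⁅fm X, Ψ z⁆ = Ψ ⁅X, z⁆ := fun X hX => (hfm X hX).2
  have hfm_eq : ∀ X ∈ m, ∀ Y ∈ m, (∀ z ∈ n, ⁅Y, Ψ z⁆ = Ψ ⁅X, z⁆) → fm X = Y := by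
    intro X hX Y hY hspec
    exact huniqm _ (hfm_mem X hX) _ hY fun z hz => by
      rw [hfm_spec X hX z hz, hspec z hz]
  have hfm_gen : ∀ x ∈ n, ∀ a ∈ nb, fm ⁅x, a⁆ = ⁅Ψ x, fnb a⁆ := by
    intro x hx a ha
    exact hfm_eq _ (hbrk₁ x hx a ha) _ (hbrk₁ _ (hΨn x hx) _ (hfnb_mem a ha))
      fun z hz => hcand x hx a ha z hz
  have hfm_zero : fm 0 = 0 := hfm_eq 0 (zero_mem _) 0 (zero_mem _) (by simp)
  have hfm_add : ∀ X ∈ m, ∀ Y ∈ m, fm (X + Y) = fm X + fm Y := by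
    intro X hX Y hY
    refine hfm_eq _ (add_mem hX hY) _ (add_mem (hfm_mem X hX) (hfm_mem Y hY)) fun z hz => ?_
    rw [add_lie, hfm_spec X hX z hz, hfm_spec Y hY z hz, add_lie, map_add]
  have hfm_smul : ∀ (c : k), ∀ X ∈ m, fm (c • X) = c • fm X := by
    intro c X hX
    refine hfm_eq _ (Submodule.smul_mem _ _ hX) _ (Submodule.smul_mem _ _ (hfm_mem X hX))
      fun z hz => ?_
    rw [smul_lie, hfm_spec X hX z hz, smul_lie, map_smul]
  have hfm_h : fm h = h := by
    refine hfm_eq h hhm h hhm fun z hz => ?_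
    rw [hgradn _ (hΨn z hz), hgradn z hz, map_smul]
  have hfm_inj : ∀ X ∈ m, fm X = 0 → X = 0 := by
    intro X hX h0
    refine hfaithful X hX fun x hx => ?_
    have hsp := hfm_spec X hX x hx
    rw [h0, zero_lie] at hsp
    exact hΨinj _ (hbrk₂ X hX x hx) hsp.symm
  -- m is closed under brackets
  have hmm : ∀ X ∈ m, ∀ Y ∈ m, ⁅X, Y⁆ ∈ m := by
    intro X hX Y hY
    rw [hm_span] at hY
    induction hY using Submodule.span_induction with
    | mem w hw =>
      obtain ⟨x, hx, a, ha, rfl⟩ := hw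
      have e1 : ⁅X, ⁅x, a⁆⁆ = ⁅⁅X, x⁆, a⁆ + ⁅x, ⁅X, a⁆⁆ := leibniz_lie X x a
      rw [e1]
      exact add_mem (hbrk₁ _ (hbrk₂ X hX x hx) a ha) (hbrk₁ x hx _ (hbrk₃ X hX a ha))
    | zero => simpa using zero_mem m
    | add x y hxm hym ihx ihy => rw [lie_add]; exact add_mem ihx ihy
    | smul c x hxm ih => rw [lie_smul]; exact Submodule.smul_mem _ _ ih
  have hfm_brk : ∀ X ∈ m, ∀ Y ∈ m, fm ⁅X, Y⁆ = ⁅fm X, fm Y⁆ := by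
    intro X hX Y hY
    refine hfm_eq _ (hmm X hX Y hY) _ (hmm _ (hfm_mem X hX) _ (hfm_mem Y hY)) fun z hz => ?_
    rw [lie_lie, lie_lie, hfm_spec Y hY z hz, hfm_spec X hX z hz,
      hfm_spec X hX _ (hbrk₂ Y hY z hz), hfm_spec Y hY _ (hbrk₂ X hX z hz), map_sub]
  have hfm_surj : ∀ Y ∈ m, ∃ X ∈ m, fm X = Y := by
    intro Y hY
    rw [hm_span] at hY
    induction hY using Submodule.span_induction with
    | mem w hw =>
      obtain ⟨u, hu, b, hb, rfl⟩ := hw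
      obtain ⟨x, hx, rfl⟩ := hΨsurj u hu
      obtain ⟨a, ha, rfl⟩ := hfnb_surj b hb
      exact ⟨⁅x, a⁆, hbrk₁ x hx a ha, hfm_gen x hx a ha⟩
    | zero => exact ⟨0, zero_mem _, hfm_zero⟩
    | add x y hxm hym ihx ihy =>
      obtain ⟨X1, hX1, rfl⟩ := ihx
      obtain ⟨X2, hX2, rfl⟩ := ihy
      exact ⟨X1 + X2, add_mem hX1 hX2, hfm_add X1 hX1 X2 hX2⟩
    | smul c x hxm ih =>
      obtain ⟨X, hX, rfl⟩ := ih
      exact ⟨c • X, Submodule.smul_mem _ _ hX, hfm_smul c X hX⟩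
  -- injectivity criterion on nb
  have hnb_ext : ∀ A ∈ nb, ∀ B ∈ nb, ⁅e, ⁅e, A⁆⁆ = ⁅e, ⁅e, B⁆⁆ → A = B := by
    intro A hA B hB hEq
    rw [ha_repr A hA, ha_repr B hB, hEq]
  -- derivation formula
  have hder : ∀ X ∈ m, ∀ a ∈ nb,
      ⁅e, ⁅e, ⁅X, a⁆⁆⁆ = (2:k) • ⁅⁅e, X⁆, ⁅e, a⁆⁆ + ⁅X, ⁅e, ⁅e, a⁆⁆⁆ := by
    intro X hX a ha
    have s1 : ⁅e, ⁅X, a⁆⁆ = ⁅⁅e, X⁆, a⁆ + ⁅X, ⁅e, a⁆⁆ := leibniz_lie e X a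
    have s2 : ⁅e, ⁅⁅e, X⁆, a⁆⁆ = ⁅⁅e, ⁅e, X⁆⁆, a⁆ + ⁅⁅e, X⁆, ⁅e, a⁆⁆ := leibniz_lie e ⁅e, X⁆ a
    have s3 : ⁅e, ⁅X, ⁅e, a⁆⁆⁆ = ⁅⁅e, X⁆, ⁅e, a⁆⁆ + ⁅X, ⁅e, ⁅e, a⁆⁆⁆ := leibniz_lie e X ⁅e, a⁆
    rw [s1, lie_add, s2, s3, hnab e he _ (heXn X hX), zero_lie, zero_add, two_smul]
    abel
  have hΨeX : ∀ X ∈ m, Ψ ⁅e, X⁆ = ⁅e, fm X⁆ := by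
    intro X hX
    rw [hskw e X, map_neg, ← hfm_spec X hX e he, hΨe]
    exact lie_skew e (fm X)
  have hfm_ea : ∀ a ∈ nb, fm ⁅e, a⁆ = ⁅e, fnb a⁆ := by
    intro a ha
    rw [hfm_gen e he a ha, hΨe]
  -- the m–nb bracket case
  have hcase5 : ∀ X ∈ m, ∀ a ∈ nb, fnb ⁅X, a⁆ = ⁅fm X, fnb a⁆ := by
    intro X hX a ha
    have hXa : ⁅X, a⁆ ∈ nb := hbrk₃ X hX a ha
    have hR : ⁅fm X, fnb a⁆ ∈ nb := hbrk₃ _ (hfm_mem X hX) _ (hfnb_mem a ha)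
    refine hnb_ext _ (hfnb_mem _ hXa) _ hR ?_
    rw [hfnb_E _ hXa, hder X hX a ha, hder _ (hfm_mem X hX) _ (hfnb_mem a ha),
      map_add, map_smul]
    congr 1
    · congr 1
      rw [hskw ⁅e, X⁆ ⁅e, a⁆, map_neg, ← hfm_spec _ (hemem a ha) _ (heXn X hX),
        hfm_ea a ha, hΨeX X hX]
      exact lie_skew ⁅e, fm X⁆ ⁅e, fnb a⁆
    · rw [← hfm_spec X hX _ (hEmem a ha), hfnb_E a ha]
  -- projections from the direct sum decomposition
  have hdecE : ∀ x : g, ∃ t : g × g × g,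
      t.1 ∈ nb ∧ t.2.1 ∈ m ∧ t.2.2 ∈ n ∧ x = t.1 + t.2.1 + t.2.2 := fun x => (hdecomp x).exists
  choose dec hdec1 hdec2 hdec3 hdecsum using hdecE
  have hdunique : ∀ x a b c : g, a ∈ nb → b ∈ m → c ∈ n → x = a + b + c →
      (dec x).1 = a ∧ (dec x).2.1 = b ∧ (dec x).2.2 = c := by
    intro x a b c ha hb hc hsum
    have h1 : dec x = (a, b, c) := (hdecomp x).unique
      ⟨hdec1 x, hdec2 x, hdec3 x, hdecsum x⟩ ⟨ha, hb, hc, hsum⟩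
    exact ⟨by rw [h1], by rw [h1], by rw [h1]⟩
  have hdec_add : ∀ x y : g, (dec (x + y)).1 = (dec x).1 + (dec y).1 ∧
      (dec (x + y)).2.1 = (dec x).2.1 + (dec y).2.1 ∧
      (dec (x + y)).2.2 = (dec x).2.2 + (dec y).2.2 := by
    intro x y
    refine hdunique (x + y) _ _ _ (add_mem (hdec1 x) (hdec1 y))
      (add_mem (hdec2 x) (hdec2 y)) (add_mem (hdec3 x) (hdec3 y)) ?_
    conv_lhs => rw [hdecsum x, hdecsum y]
    abel
  have hdec_smul : ∀ (c : k) (x : g), (dec (c • x)).1 = c • (dec x).1 ∧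
      (dec (c • x)).2.1 = c • (dec x).2.1 ∧ (dec (c • x)).2.2 = c • (dec x).2.2 := by
    intro c x
    refine hdunique (c • x) _ _ _ (Submodule.smul_mem _ _ (hdec1 x))
      (Submodule.smul_mem _ _ (hdec2 x)) (Submodule.smul_mem _ _ (hdec3 x)) ?_
    conv_lhs => rw [hdecsum x]
    rw [smul_add, smul_add]
  -- the extension as a function
  have hexΦ : ∀ x : g, ∃ y : g,
      y = fnb ((dec x).1) + fm ((dec x).2.1) + Ψ ((dec x).2.2) := fun _ => ⟨_, rfl⟩
  choose Φfun hΦdef using hexΦ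
  have hΦadd : ∀ x y : g, Φfun (x + y) = Φfun x + Φfun y := by
    intro x y
    obtain ⟨e1, e2, e3⟩ := hdec_add x y
    rw [hΦdef, hΦdef, hΦdef, e1, e2, e3, hfnb_add, hfm_add _ (hdec2 x) _ (hdec2 y), map_add]
    abel
  have hΦsmul : ∀ (c : k) (x : g), Φfun (c • x) = c • Φfun x := by
    intro c x
    obtain ⟨e1, e2, e3⟩ := hdec_smul c x
    rw [hΦdef, hΦdef, e1, e2, e3, hfnb_smul, hfm_smul _ _ (hdec2 x), map_smul, smul_add,
      smul_add]
  set Φ : g →ₗ[k] g := { toFun := Φfun, map_add' := hΦadd, map_smul' := hΦsmul } with hΦset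
  have hΦapp : ∀ x : g, Φ x = Φfun x := fun _ => rfl
  -- values of Φ on the pieces
  have hΦ_nb : ∀ a ∈ nb, Φ a = fnb a := by
    intro a ha
    obtain ⟨e1, e2, e3⟩ := hdunique a a 0 0 ha (zero_mem _) (zero_mem _) (by abel)
    rw [hΦapp, hΦdef, e1, e2, e3, hfm_zero, map_zero, add_zero, add_zero]
  have hΦ_m : ∀ X ∈ m, Φ X = fm X := by
    intro X hX
    obtain ⟨e1, e2, e3⟩ := hdunique X 0 X 0 (zero_mem _) hX (zero_mem _) (by abel)
    rw [hΦapp, hΦdef, e1, e2, e3, hfnb_zero, map_zero, add_zero, zero_add]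
  have hΦ_n : ∀ x ∈ n, Φ x = Ψ x := by
    intro x hx
    obtain ⟨e1, e2, e3⟩ := hdunique x 0 0 x (zero_mem _) (zero_mem _) hx (by abel)
    rw [hΦapp, hΦdef, e1, e2, e3, hfnb_zero, hfm_zero, zero_add, zero_add]
  have hswap : ∀ u v : g, Φ ⁅u, v⁆ = ⁅Φ u, Φ v⁆ → Φ ⁅v, u⁆ = ⁅Φ v, Φ u⁆ := by
    intro u v huv
    rw [hskw v u, map_neg, huv]
    exact lie_skew (Φ v) (Φ u)
  have hpure : ∀ p q : g, (p ∈ nb ∨ p ∈ m ∨ p ∈ n) → (q ∈ nb ∨ q ∈ m ∨ q ∈ n) →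
      Φ ⁅p, q⁆ = ⁅Φ p, Φ q⁆ := by
    have Lbb : ∀ p ∈ nb, ∀ q ∈ nb, Φ ⁅p, q⁆ = ⁅Φ p, Φ q⁆ := by
      intro p hp q hq
      rw [hnbab p hp q hq, map_zero, hΦ_nb p hp, hΦ_nb q hq,
        hnbab _ (hfnb_mem p hp) _ (hfnb_mem q hq)]
    have Lnn : ∀ p ∈ n, ∀ q ∈ n, Φ ⁅p, q⁆ = ⁅Φ p, Φ q⁆ := by
      intro p hp q hq
      rw [hnab p hp q hq, map_zero, hΦ_n p hp, hΦ_n q hq,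
        hnab _ (hΨn p hp) _ (hΨn q hq)]
    have Lmn : ∀ p ∈ m, ∀ q ∈ n, Φ ⁅p, q⁆ = ⁅Φ p, Φ q⁆ := by
      intro p hp q hq
      rw [hΦ_n _ (hbrk₂ p hp q hq), hΦ_m p hp, hΦ_n q hq]
      exact (hfm_spec p hp q hq).symm
    have Lnb : ∀ p ∈ n, ∀ q ∈ nb, Φ ⁅p, q⁆ = ⁅Φ p, Φ q⁆ := by
      intro p hp q hq
      rw [hΦ_m _ (hbrk₁ p hp q hq), hΦ_n p hp, hΦ_nb q hq, hfm_gen p hp q hq]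
    have Lmb : ∀ p ∈ m, ∀ q ∈ nb, Φ ⁅p, q⁆ = ⁅Φ p, Φ q⁆ := by
      intro p hp q hq
      rw [hΦ_nb _ (hbrk₃ p hp q hq), hΦ_m p hp, hΦ_nb q hq, hcase5 p hp q hq]
    have Lmm : ∀ p ∈ m, ∀ q ∈ m, Φ ⁅p, q⁆ = ⁅Φ p, Φ q⁆ := by
      intro p hp q hq
      rw [hΦ_m _ (hmm p hp q hq), hΦ_m p hp, hΦ_m q hq, hfm_brk p hp q hq]
    intro p q hp hq
    rcases hp with hp | hp | hp <;> rcases hq with hq | hq | hq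
    · exact Lbb p hp q hq
    · exact hswap _ _ (Lmb q hq p hp)
    · exact hswap _ _ (Lnb q hq p hp)
    · exact Lmb p hp q hq
    · exact Lmm p hp q hq
    · exact Lmn p hp q hq
    · exact Lnb p hp q hq
    · exact hswap _ _ (Lmn q hq p hp)
    · exact Lnn p hp q hq
  have hΦlie : ∀ u v : g, Φ ⁅u, v⁆ = ⁅Φ u, Φ v⁆ := by
    intro u v
    conv_lhs => rw [hdecsum u, hdecsum v]
    conv_rhs => rw [hdecsum u, hdecsum v]
    simp only [lie_add, add_lie, map_add]
    rw [hpure _ _ (Or.inl (hdec1 u)) (Or.inl (hdec1 v)),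
      hpure _ _ (Or.inl (hdec1 u)) (Or.inr (Or.inl (hdec2 v))),
      hpure _ _ (Or.inl (hdec1 u)) (Or.inr (Or.inr (hdec3 v))),
      hpure _ _ (Or.inr (Or.inl (hdec2 u))) (Or.inl (hdec1 v)),
      hpure _ _ (Or.inr (Or.inl (hdec2 u))) (Or.inr (Or.inl (hdec2 v))),
      hpure _ _ (Or.inr (Or.inl (hdec2 u))) (Or.inr (Or.inr (hdec3 v))),
      hpure _ _ (Or.inr (Or.inr (hdec3 u))) (Or.inl (hdec1 v)),
      hpure _ _ (Or.inr (Or.inr (hdec3 u))) (Or.inr (Or.inl (hdec2 v))),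
      hpure _ _ (Or.inr (Or.inr (hdec3 u))) (Or.inr (Or.inr (hdec3 v)))]
  -- bijectivity
  have hΦinj0 : ∀ x : g, Φ x = 0 → x = 0 := by
    intro x hx0
    have h1 : (0:g) = fnb ((dec x).1) + fm ((dec x).2.1) + Ψ ((dec x).2.2) := by
      rw [← hx0, hΦapp, hΦdef]
    obtain ⟨e1, e2, e3⟩ := hdunique 0 _ _ _ (hfnb_mem _ (hdec1 x)) (hfm_mem _ (hdec2 x))
      (hΨn _ (hdec3 x)) h1
    obtain ⟨z1, z2, z3⟩ := hdunique 0 0 0 0 (zero_mem _) (zero_mem _) (zero_mem _) (by abel)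
    rw [z1] at e1
    rw [z2] at e2
    rw [z3] at e3
    have a1 : (dec x).1 = 0 := hfnb_inj _ (hdec1 x) e1.symm
    have a2 : (dec x).2.1 = 0 := hfm_inj _ (hdec2 x) e2.symm
    have a3 : (dec x).2.2 = 0 := hΨinj _ (hdec3 x) e3.symm
    rw [hdecsum x, a1, a2, a3]
    abel
  have hΦsurjF : Function.Surjective Φ := by
    intro y
    obtain ⟨a, ha, hae⟩ := hfnb_surj _ (hdec1 y)
    obtain ⟨X, hX, hXe⟩ := hfm_surj _ (hdec2 y)
    obtain ⟨c, hc, hce⟩ := hΨsurj _ (hdec3 y)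
    refine ⟨a + X + c, ?_⟩
    rw [map_add, map_add, hΦ_nb a ha, hΦ_m X hX, hΦ_n c hc, hae, hXe, hce]
    exact (hdecsum y).symm
  have hbij : Function.Bijective Φ :=
    ⟨(injective_iff_map_eq_zero Φ).mpr hΦinj0, hΦsurjF⟩
  let ΦL : g ≃ₗ[k] g := LinearEquiv.ofBijective Φ hbij
  refine ⟨{ toLieHom := { Φ with map_lie' := by intro x y; exact hΦlie x y },
            invFun := ΦL.symm,
            left_inv := fun x => ΦL.symm_apply_apply x,
            right_inv := fun x => ΦL.apply_symm_apply x }, ⟨?_, ?_, ?_, ?_⟩, ?_⟩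
  · show Φ f = f
    rw [hΦ_nb f hf]
    have hEf : ⁅e, ⁅e, f⁆⁆ = (-2:k) • e := by
      rw [htriple₃, hskw e h, htriple₁, neg_smul]
    have hFe : ⁅f, ⁅f, e⁆⁆ = (-2:k) • f := by
      rw [hfe, lie_neg, hskw f h, neg_neg, htriple₂]
    rw [hfnb_def, hEf, map_smul, hΨe, lie_smul, lie_smul, hFe, smul_smul, smul_smul]
    have hc : ((4:k)⁻¹ * (-2) * (-2)) = 1 := by norm_num
    rw [hc, one_smul]
  · show Φ h = h
    rw [hΦ_m h hhm, hfm_h]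
  · show Φ e = e
    rw [hΦ_n e he, hΨe]
  · intro x hx
    show Φ x = Ψ x
    exact hΦ_n x hx
  · rintro φ' ⟨hf', hh', he', hn'⟩
    have hφ'smul : ∀ (c : k) (a : g), φ' (c • a) = c • φ' a :=
      fun c a => map_smul φ'.toLinearEquiv c a
    have hφ'add : ∀ a b : g, φ' (a + b) = φ' a + φ' b :=
      fun a b => map_add φ'.toLinearEquiv a b
    have hφ'zero : φ' (0 : g) = 0 := map_zero φ'.toLinearEquiv
    have step1 : ∀ a ∈ nb, φ' a = fnb a := by
      intro a ha
      have hEa : ⁅e, ⁅e, a⁆⁆ ∈ n := hEmem a ha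
      have h1 : φ' a = φ' ((4:k)⁻¹ • ⁅f, ⁅f, ⁅e, ⁅e, a⁆⁆⁆⁆) := by rw [← ha_repr a ha]
      rw [h1, hφ'smul, LieEquiv.map_lie, LieEquiv.map_lie, hf', hn' _ hEa, hfnb_def]
    have step2 : ∀ X ∈ Submodule.span k {z : g | ∃ x ∈ n, ∃ y ∈ nb, z = ⁅x, y⁆},
        φ' X ∈ m := by
      intro X hX
      induction hX using Submodule.span_induction with
      | mem w hw =>
        obtain ⟨x, hx, a, ha, rfl⟩ := hw
        rw [LieEquiv.map_lie, hn' x hx, step1 a ha]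
        exact hbrk₁ _ (hΨn x hx) _ (hfnb_mem a ha)
      | zero => rw [hφ'zero]; exact zero_mem _
      | add x y _ _ ihx ihy => rw [hφ'add]; exact add_mem ihx ihy
      | smul c x _ ih => rw [hφ'smul]; exact Submodule.smul_mem _ _ ih
    have step3 : ∀ X ∈ m, φ' X = fm X := by
      intro X hX
      refine (hfm_eq X hX _ (step2 X (by rw [← hm_span]; exact hX)) fun z hz => ?_).symm
      calc ⁅φ' X, Ψ z⁆ = ⁅φ' X, φ' z⁆ := by rw [hn' z hz]
        _ = φ' ⁅X, z⁆ := (LieEquiv.map_lie φ' X z).symm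
        _ = Ψ ⁅X, z⁆ := hn' _ (hbrk₂ X hX z hz)
    refine LieEquiv.ext fun x => ?_
    have h1 : φ' x = φ' ((dec x).1) + φ' ((dec x).2.1) + φ' ((dec x).2.2) := by
      conv_lhs => rw [hdecsum x]
      rw [hφ'add, hφ'add]
    rw [h1, step1 _ (hdec1 x), step3 _ (hdec2 x), hn' _ (hdec3 x)]
    show _ = Φ x
    rw [hΦapp, hΦdef]
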